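/- arXiv:1909.06698 — 3 statements merged into one kernel-verified Lean document; each statement's English description precedes it below -/
import Mathlib

section
/- Let k, t, n be integers with 2 ≤ k ≤ t ≤ n−1, and let G be a t-edge-connected simple graph of order n. Then the minimum degree of F_k(G) satisfies δ(F_k(G)) ≥ k(t−k+1). -/
open Finset SimpleGraph

open scoped Classical

variable {V : Type*}

/-- The `k`-token graph of `G`: vertices are the `k`-subsets of `V(G)`, two of them
adjacent iff their symmetric difference is a pair of adjacent vertices of `G`. -/
def tokenGraph [DecidableEq V] (G : SimpleGraph V) (k : ℕ) :
    SimpleGraph {s : Finset V // s.card = k} :=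
  SimpleGraph.fromRel fun A B => ∃ a b, G.Adj a b ∧ symmDiff A.1 B.1 = {a, b}

/-- `G` is `t`-edge-connected: removing fewer than `t` edges leaves it connected. -/
def EdgeConnected (G : SimpleGraph V) (t : ℕ) : Prop :=
  ∀ F : Finset (Sym2 V), F.card < t → (G.deleteEdges (F : Set (Sym2 V))).Connected

/-- Edge-connectivity `λ(G)`. -/
noncomputable def edgeConn (G : SimpleGraph V) : ℕ :=
  sSup {t | EdgeConnected G t}

/-- `G` is `t`-vertex-connected. -/
def VertexConnected [Fintype V] (G : SimpleGraph V) (t : ℕ) : Prop :=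
  t < Fintype.card V ∧
    ∀ S : Finset V, S.card < t → (G.induce ((↑(Sᶜ) : Set V))).Connected

/-- Vertex-connectivity `κ(G)`. -/
noncomputable def vertexConn [Fintype V] (G : SimpleGraph V) : ℕ :=
  sSup {t | VertexConnected G t}

/-- A `t`-edge-connected graph on at least two vertices has minimum degree at least `t`. -/
lemma degree_ge_of_edgeConnected [Fintype V] [DecidableEq V] {G : SimpleGraph V} {t : ℕ}
    (hG : EdgeConnected G t) (hcard : 2 ≤ Fintype.card V) (v : V) : t ≤ G.degree v := by
  by_contra h
  push_neg at h
  have hF : (G.incidenceFinset v).card < t := by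
    rwa [G.card_incidenceFinset_eq_degree]
  have hconn := hG _ hF
  have : Nontrivial V := Fintype.one_lt_card_iff_nontrivial.mp hcard
  obtain ⟨w, hw⟩ := exists_ne v
  obtain ⟨p⟩ := hconn.preconnected v w
  cases p with
  | nil => exact hw rfl
  | cons hadj q =>
    rw [SimpleGraph.deleteEdges_adj] at hadj
    refine hadj.2 ?_
    simp only [Finset.mem_coe, SimpleGraph.mem_incidenceFinset, SimpleGraph.mk'_mem_incidenceSet_iff]
    exact ⟨hadj.1, Or.inl trivial⟩

lemma card_move [DecidableEq V] {A : Finset V} {a b : V} (ha : a ∈ A) (hb : b ∉ A) :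
    (insert b (A.erase a)).card = A.card := by
  rw [Finset.card_insert_of_notMem (fun hc => hb (Finset.mem_of_mem_erase hc)),
    Finset.card_erase_of_mem ha]
  have : 1 ≤ A.card := Finset.card_pos.mpr ⟨a, ha⟩
  omega

lemma token_adj_move [DecidableEq V] (G : SimpleGraph V) {k : ℕ} {A : Finset V}
    (hA : A.card = k) {a b : V} (ha : a ∈ A) (hb : b ∉ A) (hadj : G.Adj a b) :
    (tokenGraph G k).Adj ⟨A, hA⟩ ⟨insert b (A.erase a), by rw [card_move ha hb, hA]⟩ := by
  have hab : a ≠ b := fun h => hb (h ▸ ha)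
  rw [tokenGraph, SimpleGraph.fromRel_adj]
  constructor
  · intro hEq
    have : b ∈ A := by
      have := congrArg Subtype.val hEq
      simp only at this
      rw [this]; exact Finset.mem_insert_self _ _
    exact hb this
  · left
    refine ⟨a, b, hadj, ?_⟩
    ext x
    simp only [Finset.mem_symmDiff, Finset.mem_insert, Finset.mem_erase, Finset.mem_singleton]
    constructor
    · rintro (⟨hxA, hx⟩ | ⟨hx, hxA⟩)
      · push_neg at hx
        left
        by_contra hxa
        exact (hx.2 hxa hxA).elim
      · rcases hx with rfl | ⟨_, hxA'⟩
        · right; rfl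
        · exact absurd hxA' hxA
    · rintro (rfl | rfl)
      · exact Or.inl ⟨ha, by push_neg; exact ⟨hab, fun h => absurd rfl h⟩⟩
      · exact Or.inr ⟨Or.inl rfl, hb⟩

theorem stmt2 [Fintype V] [DecidableEq V] (G : SimpleGraph V) (n t k : ℕ)
    (hn : Fintype.card V = n) (h2k : 2 ≤ k) (hkt : k ≤ t) (htn : t ≤ n - 1)
    (hG : EdgeConnected G t) :
    k * (t - k + 1) ≤ (tokenGraph G k).minDegree := by
  have hnV : 3 ≤ Fintype.card V := by omega
  have hdeg : ∀ v : V, t ≤ G.degree v := fun v =>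
    degree_ge_of_edgeConnected hG (by omega) v
  have hkV : k ≤ Fintype.card V := by omega
  obtain ⟨s0, _, hs0⟩ := Finset.exists_subset_card_eq
    (by simpa using hkV : k ≤ (Finset.univ : Finset V).card)
  have : Nonempty {s : Finset V // s.card = k} := ⟨⟨s0, hs0⟩⟩
  apply SimpleGraph.le_minDegree_of_forall_le_degree
  rintro ⟨A, hA⟩
  -- the set of moves
  set S : Finset (V × V) := Finset.univ.filter
    (fun p => p.1 ∈ A ∧ p.2 ∉ A ∧ G.Adj p.1 p.2) with hSdef
  have hmemS : ∀ p : V × V, p ∈ S ↔ p.1 ∈ A ∧ p.2 ∉ A ∧ G.Adj p.1 p.2 := by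
    intro p; simp [hSdef]
  -- the move map
  set f : V × V → {s : Finset V // s.card = k} := fun p =>
    if h : p.1 ∈ A ∧ p.2 ∉ A then
      ⟨insert p.2 (A.erase p.1), by rw [card_move h.1 h.2, hA]⟩
    else ⟨A, hA⟩ with hfdef
  have hf : ∀ p ∈ S, (f p).1 = insert p.2 (A.erase p.1) := by
    intro p hp
    rw [hmemS] at hp
    simp [hfdef, dif_pos (⟨hp.1, hp.2.1⟩ : p.1 ∈ A ∧ p.2 ∉ A)]
  have key : S.card ≤ (tokenGraph G k).degree ⟨A, hA⟩ := by
    rw [SimpleGraph.degree]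
    apply Finset.card_le_card_of_injOn f
    · intro p hp
      rw [Finset.mem_coe, hmemS] at hp
      rw [Finset.mem_coe, SimpleGraph.mem_neighborFinset]
      have hval : f p = ⟨insert p.2 (A.erase p.1), by rw [card_move hp.1 hp.2.1, hA]⟩ :=
        Subtype.ext (hf p ((hmemS p).mpr hp))
      rw [hval]
      exact token_adj_move G hA hp.1 hp.2.1 hp.2.2
    · intro p hp q hq hpq
      simp only [Finset.mem_coe] at hp hq
      have hp' := (hmemS p).mp hp
      have hq' := (hmemS q).mp hq
      have hEq : insert p.2 (A.erase p.1) = insert q.2 (A.erase q.1) := by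
        rw [← hf p hp, ← hf q hq, hpq]
      -- second components agree
      have hb : p.2 = q.2 := by
        have : p.2 ∈ insert q.2 (A.erase q.1) := hEq ▸ Finset.mem_insert_self _ _
        rcases Finset.mem_insert.mp this with h | h
        · exact h
        · exact absurd (Finset.mem_of_mem_erase h) hp'.2.1
      -- first components agree
      have ha : p.1 = q.1 := by
        by_contra hne
        have h1 : p.1 ∈ A.erase q.1 := Finset.mem_erase.mpr ⟨hne, hp'.1⟩
        have h2 : p.1 ∈ insert p.2 (A.erase p.1) := by
          rw [hEq]; exact Finset.mem_insert_of_mem h1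
        rcases Finset.mem_insert.mp h2 with h | h
        · exact hp'.2.1 (h ▸ hp'.1)
        · exact Finset.notMem_erase _ _ h
      exact Prod.ext ha hb
  refine le_trans ?_ key
  -- count the moves: S = ⋃_{a ∈ A} {a} × (N(a) \ A)
  have hScard : S.card = ∑ a ∈ A, (G.neighborFinset a \ A).card := by
    rw [Finset.card_eq_sum_card_fiberwise (f := Prod.fst) (t := A)
      (fun p hp => ((hmemS p).mp hp).1)]
    apply Finset.sum_congr rfl
    intro a haA
    rw [← Finset.card_image_of_injOn (f := Prod.snd)]
    · congr 1
      ext b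
      simp only [Finset.mem_image, Finset.mem_filter, hmemS, Finset.mem_univ, true_and,
        Finset.mem_sdiff, SimpleGraph.mem_neighborFinset]
      constructor
      · rintro ⟨p, ⟨⟨_, h2, h3⟩, h4⟩, rfl⟩
        rw [h4] at h3; exact ⟨h3, h2⟩
      · rintro ⟨h1, h2⟩
        exact ⟨(a, b), ⟨⟨haA, h2, h1⟩, rfl⟩, rfl⟩
    · intro p hp q hq h
      simp only [Finset.mem_coe, Finset.mem_filter] at hp hq
      exact Prod.ext (hp.2.trans hq.2.symm) h
  rw [hScard]
  calc k * (t - k + 1) = ∑ _a ∈ A, (t - k + 1) := by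
        rw [Finset.sum_const, hA, smul_eq_mul, mul_comm]
    _ ≤ ∑ a ∈ A, (G.neighborFinset a \ A).card := by
        apply Finset.sum_le_sum
        intro a haA
        have h1 : (G.neighborFinset a \ A).card + (G.neighborFinset a ∩ A).card
            = G.degree a := by
          rw [Finset.card_sdiff_add_card_inter, SimpleGraph.degree]
        have h2 : (G.neighborFinset a ∩ A).card ≤ (A.erase a).card := by
          apply Finset.card_le_card
          intro x hx
          rw [Finset.mem_inter, SimpleGraph.mem_neighborFinset] at hx
          exact Finset.mem_erase.mpr ⟨fun h => (h ▸ hx.1).ne rfl, hx.2⟩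
        rw [Finset.card_erase_of_mem haA, hA] at h2
        have h3 := hdeg a
        omega
end

section
/- Let X be a k-subset of V(G) and let P be a path of G from x to y with x ∈ X and y ∉ X, directed from x to y. Then there is a path in F_k(G) from X to Y := (X\{x}) ∪ {y} having the same length as P, all of whose edges correspond to edges of P. -/
open Finset SimpleGraph

open scoped Classical

variable {V : Type*}

/-- Differences when sliding a token from `x` to a free vertex `v`. -/
lemma sdiff_slide [DecidableEq V] {x v : V} {X : Finset V} (hx : x ∈ X) (hv : v ∉ X)
    (hxv : x ≠ v) :
    X \ insert v (X.erase x) = {x} ∧ insert v (X.erase x) \ X = {v} := by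
  constructor
  all_goals
    ext a
    simp only [Finset.mem_sdiff, Finset.mem_insert, Finset.mem_erase, Finset.mem_singleton]
    by_cases hax : a = x <;> by_cases hav : a = v <;> simp_all

/-- Differences between the two sets obtained by removing `x` resp. `v` and adding `y`. -/
lemma sdiff_swap [DecidableEq V] {x v y : V} {X : Finset V} (hx : x ∈ X) (hv : v ∈ X)
    (hy : y ∉ X) (hxv : x ≠ v) :
    insert y (X.erase v) \ insert y (X.erase x) = {x} ∧
      insert y (X.erase x) \ insert y (X.erase v) = {v} := by
  have hxy : x ≠ y := fun e => hy (e ▸ hx)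
  have hvy : v ≠ y := fun e => hy (e ▸ hv)
  constructor
  all_goals
    ext a
    simp only [Finset.mem_sdiff, Finset.mem_insert, Finset.mem_erase, Finset.mem_singleton]
    by_cases hax : a = x <;> by_cases hav : a = v <;> by_cases hay : a = y <;> simp_all

/-- Adjacency criterion in the token graph. -/
lemma token_adj [DecidableEq V] {G : SimpleGraph V} {k : ℕ}
    (A B : {s : Finset V // s.card = k}) {a b : V} (hab : G.Adj a b)
    (hAB : symmDiff A.1 B.1 = {a, b}) : (tokenGraph G k).Adj A B := by
  refine ⟨fun h => ?_, Or.inl ⟨a, b, hab, hAB⟩⟩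
  subst h
  rw [symmDiff_self] at hAB
  have : a ∈ (⊥ : Finset V) := hAB ▸ (by simp)
  simp at this

/-- Adjacency in the token graph from one-element differences. -/
lemma token_adj' [DecidableEq V] {G : SimpleGraph V} {k : ℕ}
    (A B : {s : Finset V // s.card = k}) {a b : V} (hab : G.Adj a b)
    (h1 : A.1 \ B.1 = {a}) (h2 : B.1 \ A.1 = {b}) : (tokenGraph G k).Adj A B := by
  refine token_adj A B hab ?_
  rw [symmDiff_def, h1, h2, Finset.sup_eq_union, ← Finset.insert_eq]

/-- From a token-graph edge with known one-element differences, identify its `G`-edge. -/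
lemma token_edge_spec [DecidableEq V] {k : ℕ} (S T A B : {s : Finset V // s.card = k})
    {s0 t0 a b : V} (hST : S.1 \ T.1 = {s0}) (hTS : T.1 \ S.1 = {t0})
    (hAB : s(A, B) = s(S, T)) (ha : A.1 \ B.1 = {a}) (hb : B.1 \ A.1 = {b}) :
    s(a, b) = s(s0, t0) := by
  rw [Sym2.eq_iff] at hAB
  rcases hAB with ⟨hA, hB⟩ | ⟨hA, hB⟩
  · subst hA; subst hB
    rw [hST, Finset.singleton_inj] at ha
    rw [hTS, Finset.singleton_inj] at hb
    rw [← ha, ← hb]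
  · subst hA; subst hB
    rw [hTS, Finset.singleton_inj] at ha
    rw [hST, Finset.singleton_inj] at hb
    rw [← ha, ← hb, Sym2.eq_swap]

theorem stmt12 [DecidableEq V] (G : SimpleGraph V) (k : ℕ)
    (X : Finset V) (hX : X.card = k) {x y : V}
    (P : G.Walk x y) (hP : P.IsPath) (hx : x ∈ X) (hy : y ∉ X) :
    ∃ hY : (insert y (X.erase x)).card = k,
      ∃ W : (tokenGraph G k).Walk ⟨X, hX⟩ ⟨insert y (X.erase x), hY⟩,
        W.length = P.length ∧
        ∀ A B a b, s(A, B) ∈ W.edges →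
          A.1 \ B.1 = {a} → B.1 \ A.1 = {b} → s(a, b) ∈ P.edges := by
  induction P generalizing X with
  | nil => exact absurd hx hy
  | @cons x v y h p ih =>
    rw [Walk.cons_isPath_iff] at hP
    obtain ⟨hp, hxp⟩ := hP
    have hxy : x ≠ y := fun e => hy (e ▸ hx)
    have hxv : x ≠ v := h.ne
    have hkpos : 0 < k := hX ▸ Finset.card_pos.mpr ⟨x, hx⟩
    have hY : (insert y (X.erase x)).card = k := by
      rw [Finset.card_insert_of_notMem (fun hc => hy (Finset.mem_of_mem_erase hc)),
        Finset.card_erase_of_mem hx, hX]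
      omega
    refine ⟨hY, ?_⟩
    by_cases hvy : v = y
    · -- last step: a single edge
      subst hvy
      have hpnil : p = Walk.nil := Walk.isPath_iff_eq_nil.mp hp
      have hvX : v ∉ X := hy
      obtain ⟨hd1, hd2⟩ := sdiff_slide hx hvX hxv
      have hadj : (tokenGraph G k).Adj ⟨X, hX⟩ ⟨insert v (X.erase x), hY⟩ :=
        token_adj' _ _ h hd1 hd2
      refine ⟨Walk.cons hadj Walk.nil, by simp [hpnil], ?_⟩
      intro A B a b hmem ha hb
      simp only [Walk.edges_cons, Walk.edges_nil, List.mem_singleton] at hmem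
      have := token_edge_spec _ _ _ _ hd1 hd2 hmem ha hb
      simp [this]
    · by_cases hvX : v ∈ X
      · -- v already has a token: first push it along p, then slide x → v at the end
        obtain ⟨hY₁, W', hlen, hedges⟩ := ih X hX hp hvX hy
        obtain ⟨hd1, hd2⟩ := sdiff_swap hx hvX hy hxv
        have hadj : (tokenGraph G k).Adj ⟨insert y (X.erase v), hY₁⟩
            ⟨insert y (X.erase x), hY⟩ := token_adj' _ _ h hd1 hd2
        refine ⟨W'.concat hadj, ?_, ?_⟩
        · rw [Walk.length_concat, hlen]; simp
        · intro A B a b hmem ha hb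
          rw [Walk.edges_concat, List.concat_eq_append, List.mem_append, List.mem_singleton] at hmem
          rcases hmem with hmem | hmem
          · exact List.mem_cons_of_mem _ (hedges A B a b hmem ha hb)
          · have := token_edge_spec _ _ _ _ hd1 hd2 hmem ha hb
            simp only [Walk.edges_cons, List.mem_cons]
            left
            rw [this, Sym2.eq_swap]
      · -- v is free: slide x → v first, then continue along p
        have hX' : (insert v (X.erase x)).card = k := by
          rw [Finset.card_insert_of_notMem (fun hc => hvX (Finset.mem_of_mem_erase hc)),
            Finset.card_erase_of_mem hx, hX]
          omega
        have hv' : v ∈ insert v (X.erase x) := Finset.mem_insert_self _ _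
        have hy' : y ∉ insert v (X.erase x) := by
          intro hc
          rcases Finset.mem_insert.mp hc with e | hm
          · exact hvy e.symm
          · exact hy (Finset.mem_of_mem_erase hm)
        obtain ⟨hYv, W', hlen, hedges⟩ := ih (insert v (X.erase x)) hX' hp hv' hy'
        have herase : (insert v (X.erase x)).erase v = X.erase x :=
          Finset.erase_insert (fun hc => hvX (Finset.mem_of_mem_erase hc))
        have heq0 : insert y ((insert v (X.erase x)).erase v) = insert y (X.erase x) := by
          rw [herase]
        have heq : (⟨insert y ((insert v (X.erase x)).erase v), hYv⟩ :
            {s : Finset V // s.card = k}) = ⟨insert y (X.erase x), hY⟩ := Subtype.ext heq0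
        obtain ⟨hd1, hd2⟩ := sdiff_slide hx hvX hxv
        have hadj : (tokenGraph G k).Adj ⟨X, hX⟩ ⟨insert v (X.erase x), hX'⟩ :=
          token_adj' _ _ h hd1 hd2
        refine ⟨Walk.cons hadj (W'.copy rfl heq), ?_, ?_⟩
        · simp [Walk.length_copy, hlen]
        · intro A B a b hmem ha hb
          rw [Walk.edges_cons, Walk.edges_copy, List.mem_cons] at hmem
          rcases hmem with hmem | hmem
          · have := token_edge_spec _ _ _ _ hd1 hd2 hmem ha hb
            simp only [Walk.edges_cons, List.mem_cons]
            left
            exact this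
          · exact List.mem_cons_of_mem _ (hedges A B a b hmem ha hb)
end

section
/- For the complete graph K_{t+1} and any k with 2 ≤ k ≤ t, the edge-connectivity of the k-token graph satisfies λ(F_k(K_{t+1})) = k(t−k+1). -/
open Finset SimpleGraph

open scoped Classical

variable {V : Type*}

section TokenAux
variable {α : Type*} [DecidableEq α]

/-- ordered cross pairs (from `S` to its complement among `k`-subsets of `W`). -/
def cutP (W : Finset α) (k : ℕ) (S : Finset (Finset α)) : Finset (Finset α × Finset α) :=
  (S ×ˢ (W.powersetCard k \ S)).filter fun p => (p.1 \ p.2).card = 1 ∧ (p.2 \ p.1).card = 1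

lemma mem_cutP {W : Finset α} {k : ℕ} {S : Finset (Finset α)} {p : Finset α × Finset α} :
    p ∈ cutP W k S ↔ p.1 ∈ S ∧ (p.2 ∈ W.powersetCard k ∧ p.2 ∉ S) ∧
      (p.1 \ p.2).card = 1 ∧ (p.2 \ p.1).card = 1 := by
  simp [cutP, Finset.mem_filter, Finset.mem_product, and_assoc]

lemma cutP_compl_card {W : Finset α} {k : ℕ} {S : Finset (Finset α)}
    (hS : S ⊆ W.powersetCard k) :
    (cutP W k (W.powersetCard k \ S)).card = (cutP W k S).card := by
  apply Finset.card_bij (fun p _ => Prod.swap p)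
  · rintro ⟨a, b⟩ hp
    simp only [Prod.swap_prod_mk]
    rw [mem_cutP] at hp ⊢
    obtain ⟨h1, ⟨h2, h3⟩, h4, h5⟩ := hp
    have ha := Finset.mem_sdiff.1 h1
    have hb : b ∈ S := by
      by_contra hb
      exact h3 (Finset.mem_sdiff.2 ⟨h2, hb⟩)
    exact ⟨hb, ⟨ha.1, ha.2⟩, h5, h4⟩
  · rintro ⟨a, b⟩ _ ⟨c, d⟩ _ h
    simp only [Prod.swap_prod_mk, Prod.mk.injEq] at h
    simp [h.1, h.2]
  · rintro ⟨a, b⟩ hp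
    rw [mem_cutP] at hp
    obtain ⟨h1, ⟨h2, h3⟩, h4, h5⟩ := hp
    refine ⟨(b, a), ?_, rfl⟩
    rw [mem_cutP]
    refine ⟨Finset.mem_sdiff.2 ⟨h2, h3⟩, ⟨hS h1, fun hb' => (Finset.mem_sdiff.1 hb').2 h1⟩, h5, h4⟩

lemma down_cross {W : Finset α} {k : ℕ} {S : Finset (Finset α)} {x : α}
    (hS : S ⊆ W.powersetCard k) (hx : ∀ A ∈ S, x ∈ A) :
    S.card * (W.card - k) ≤ ((cutP W k S).filter fun p => x ∉ p.2).card := by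
  classical
  set f : Finset α → Finset (Finset α × Finset α) :=
    fun A => (W \ A).image fun y => (A, insert y (A.erase x)) with hf
  have hsub : S.biUnion f ⊆ (cutP W k S).filter fun p => x ∉ p.2 := by
    intro p hp
    simp only [hf, Finset.mem_biUnion, Finset.mem_image] at hp
    obtain ⟨A, hA, y, hy, rfl⟩ := hp
    have hAk := Finset.mem_powersetCard.1 (hS hA)
    have hyW := (Finset.mem_sdiff.1 hy).1
    have hyA := (Finset.mem_sdiff.1 hy).2
    have hxA := hx A hA
    have hk1 : 1 ≤ k := by
      rw [← hAk.2]; exact Finset.card_pos.2 ⟨x, hxA⟩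
    have hxy : x ≠ y := fun h => hyA (h ▸ hxA)
    have hxB : x ∉ insert y (A.erase x) := by
      simp [Finset.mem_insert, Finset.mem_erase, hxy]
    have hBW : insert y (A.erase x) ⊆ W := by
      intro c hc
      rcases Finset.mem_insert.1 hc with rfl | hc
      · exact hyW
      · exact hAk.1 (Finset.mem_of_mem_erase hc)
    have hBcard : (insert y (A.erase x)).card = k := by
      rw [Finset.card_insert_of_notMem (fun h => hyA (Finset.mem_of_mem_erase h)),
        Finset.card_erase_of_mem hxA, hAk.2]
      omega
    have hBS : insert y (A.erase x) ∉ S := fun h => hxB (hx _ h)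
    have hAB : A \ insert y (A.erase x) = {x} := by
      ext c
      simp only [Finset.mem_sdiff, Finset.mem_insert, Finset.mem_erase, Finset.mem_singleton]
      constructor
      · rintro ⟨hcA, hc⟩
        push_neg at hc
        by_contra hcx
        exact (hc.2 hcx) hcA
      · rintro rfl
        refine ⟨hxA, ?_⟩
        push_neg
        exact ⟨hxy, fun h => absurd rfl h⟩
    have hBA : insert y (A.erase x) \ A = {y} := by
      ext c
      simp only [Finset.mem_sdiff, Finset.mem_insert, Finset.mem_erase, Finset.mem_singleton]
      constructor
      · rintro ⟨rfl | hc, hcA⟩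
        · rfl
        · exact absurd hc.2 hcA
      · rintro rfl
        exact ⟨Or.inl rfl, hyA⟩
    refine Finset.mem_filter.2 ⟨mem_cutP.2 ⟨hA,
      ⟨Finset.mem_powersetCard.2 ⟨hBW, hBcard⟩, hBS⟩, ?_, ?_⟩, hxB⟩
    · rw [hAB]; simp
    · rw [hBA]; simp
  have hdisj : ∀ A ∈ S, ∀ B ∈ S, A ≠ B → Disjoint (f A) (f B) := by
    intro A _ B _ hAB
    rw [Finset.disjoint_left]
    intro p hpA hpB
    simp only [hf, Finset.mem_image] at hpA hpB
    obtain ⟨y, _, rfl⟩ := hpA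
    obtain ⟨y', _, h⟩ := hpB
    exact hAB ((Prod.ext_iff.1 h).1.symm)
  have hcard : (S.biUnion f).card = S.card * (W.card - k) := by
    rw [Finset.card_biUnion hdisj]
    rw [Finset.sum_congr rfl (fun A hA => ?_), Finset.sum_const, smul_eq_mul]
    have hAk := Finset.mem_powersetCard.1 (hS hA)
    have : (f A).card = (W \ A).card := by
      apply Finset.card_image_of_injOn
      intro y hy y' hy' h
      have h2 := (Prod.ext_iff.1 h).2
      simp only at h2
      have hyA := (Finset.mem_sdiff.1 hy).2
      have hy'A := (Finset.mem_sdiff.1 hy').2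
      have : y ∈ insert y' (A.erase x) := h2 ▸ Finset.mem_insert_self y _
      rcases Finset.mem_insert.1 this with rfl | hc
      · rfl
      · exact absurd (Finset.mem_of_mem_erase hc) hyA
    rw [this, Finset.card_sdiff_of_subset hAk.1, hAk.2]
  calc S.card * (W.card - k) = (S.biUnion f).card := hcard.symm
    _ ≤ _ := Finset.card_le_card hsub

lemma up_cross {W : Finset α} {k : ℕ} {S : Finset (Finset α)} {x : α}
    (hS : S ⊆ W.powersetCard k) (hx : ∀ A ∈ S, x ∉ A) (hxW : x ∈ W) :
    S.card * k ≤ ((cutP W k S).filter fun p => x ∈ p.2).card := by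
  classical
  set f : Finset α → Finset (Finset α × Finset α) :=
    fun A => A.image fun a => (A, insert x (A.erase a)) with hf
  have hsub : S.biUnion f ⊆ (cutP W k S).filter fun p => x ∈ p.2 := by
    intro p hp
    simp only [hf, Finset.mem_biUnion, Finset.mem_image] at hp
    obtain ⟨A, hA, a, ha, rfl⟩ := hp
    have hAk := Finset.mem_powersetCard.1 (hS hA)
    have hxA := hx A hA
    have hax : a ≠ x := fun h => hxA (h ▸ ha)
    have hxB : x ∈ insert x (A.erase a) := Finset.mem_insert_self x _
    have hBW : insert x (A.erase a) ⊆ W := by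
      intro c hc
      rcases Finset.mem_insert.1 hc with rfl | hc
      · exact hxW
      · exact hAk.1 (Finset.mem_of_mem_erase hc)
    have hBcard : (insert x (A.erase a)).card = k := by
      rw [Finset.card_insert_of_notMem (fun h => hxA (Finset.mem_of_mem_erase h)),
        Finset.card_erase_of_mem ha, hAk.2]
      have hk1 : 1 ≤ k := by rw [← hAk.2]; exact Finset.card_pos.2 ⟨a, ha⟩
      omega
    have hBS : insert x (A.erase a) ∉ S := fun h => (hx _ h) hxB
    have hAB : A \ insert x (A.erase a) = {a} := by
      ext c
      simp only [Finset.mem_sdiff, Finset.mem_insert, Finset.mem_erase, Finset.mem_singleton]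
      constructor
      · rintro ⟨hcA, hc⟩
        push_neg at hc
        by_contra hca
        exact (hc.2 hca) hcA
      · rintro rfl
        refine ⟨ha, ?_⟩
        push_neg
        exact ⟨hax, fun h => absurd rfl h⟩
    have hBA : insert x (A.erase a) \ A = {x} := by
      ext c
      simp only [Finset.mem_sdiff, Finset.mem_insert, Finset.mem_erase, Finset.mem_singleton]
      constructor
      · rintro ⟨rfl | hc, hcA⟩
        · rfl
        · exact absurd hc.2 hcA
      · rintro rfl
        exact ⟨Or.inl rfl, hxA⟩
    refine Finset.mem_filter.2 ⟨mem_cutP.2 ⟨hA,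
      ⟨Finset.mem_powersetCard.2 ⟨hBW, hBcard⟩, hBS⟩, ?_, ?_⟩, hxB⟩
    · rw [hAB]; simp
    · rw [hBA]; simp
  have hdisj : ∀ A ∈ S, ∀ B ∈ S, A ≠ B → Disjoint (f A) (f B) := by
    intro A _ B _ hAB
    rw [Finset.disjoint_left]
    intro p hpA hpB
    simp only [hf, Finset.mem_image] at hpA hpB
    obtain ⟨y, _, rfl⟩ := hpA
    obtain ⟨y', _, h⟩ := hpB
    exact hAB ((Prod.ext_iff.1 h).1.symm)
  have hcard : (S.biUnion f).card = S.card * k := by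
    rw [Finset.card_biUnion hdisj]
    rw [Finset.sum_congr rfl (fun A hA => ?_), Finset.sum_const, smul_eq_mul]
    have hAk := Finset.mem_powersetCard.1 (hS hA)
    have hxA := hx A hA
    have : (f A).card = A.card := by
      apply Finset.card_image_of_injOn
      intro a ha a' ha' h
      have h2 := (Prod.ext_iff.1 h).2
      simp only at h2
      have e1 : A.erase a = A.erase a' := by
        have hxa : x ∉ A.erase a := fun h => hxA (Finset.mem_of_mem_erase h)
        have hxa' : x ∉ A.erase a' := fun h => hxA (Finset.mem_of_mem_erase h)
        rw [← Finset.erase_insert hxa, ← Finset.erase_insert hxa', h2]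
      by_contra hne
      have : a ∈ A.erase a' := Finset.mem_erase.2 ⟨hne, ha⟩
      rw [← e1] at this
      exact (Finset.mem_erase.1 this).1 rfl
    rw [this, hAk.2]
  calc S.card * k = (S.biUnion f).card := hcard.symm
    _ ≤ _ := Finset.card_le_card hsub

lemma cutP_erase_eq {W : Finset α} {x : α} {k : ℕ} {S : Finset (Finset α)} :
    cutP (W.erase x) k (S.filter fun A => x ∉ A) =
      (cutP W k S).filter fun p => x ∉ p.1 ∧ x ∉ p.2 := by
  ext p
  simp only [mem_cutP, Finset.mem_filter, Finset.mem_powersetCard, Finset.subset_erase]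
  constructor
  · rintro ⟨⟨h1, h2⟩, ⟨⟨⟨h3, h4⟩, h5⟩, h6⟩, h7⟩
    have h6' : p.2 ∉ S := fun hs => h6 ⟨hs, h4⟩
    exact ⟨⟨h1, ⟨⟨h3, h5⟩, h6'⟩, h7⟩, h2, h4⟩
  · rintro ⟨⟨h1, ⟨⟨h3, h5⟩, h6⟩, h7⟩, h2, h4⟩
    exact ⟨⟨h1, h2⟩, ⟨⟨⟨h3, h4⟩, h5⟩, fun hs => h6 hs.1⟩, h7⟩

lemma cutP_insert_le {W : Finset α} {x : α} {k : ℕ} {S : Finset (Finset α)}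
    (hxW : x ∈ W) (hk : 1 ≤ k) :
    (cutP (W.erase x) (k - 1) ((S.filter fun A => x ∈ A).image fun A => A.erase x)).card ≤
      ((cutP W k S).filter fun p => x ∈ p.1 ∧ x ∈ p.2).card := by
  classical
  apply Finset.card_le_card_of_injOn (fun p => (insert x p.1, insert x p.2))
  · rintro ⟨p1, p2⟩ hp
    rw [Finset.mem_coe, mem_cutP] at hp
    obtain ⟨h1, ⟨h2, h3⟩, h4, h5⟩ := hp
    simp only [Finset.mem_image, Finset.mem_filter] at h1
    obtain ⟨A, ⟨hAS, hxA⟩, hAe⟩ := h1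
    subst hAe
    set p : Finset α × Finset α := (A.erase x, p2) with hpdef
    have hA1 : insert x (A.erase x) = A := Finset.insert_erase hxA
    obtain ⟨h2a, h2b⟩ := Finset.mem_powersetCard.1 h2
    have hxp2 : x ∉ p.2 := fun h => (Finset.mem_erase.1 (h2a h)).1 rfl
    have hxp1 : x ∉ A.erase x := fun h => (Finset.mem_erase.1 h).1 rfl
    have hins2W : insert x p.2 ⊆ W := by
      intro c hc
      rcases Finset.mem_insert.1 hc with rfl | hc
      · exact hxW
      · exact Finset.mem_of_mem_erase (h2a hc)
    have hins2card : (insert x p.2).card = k := by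
      rw [Finset.card_insert_of_notMem hxp2, h2b]; omega
    have hins2S : insert x p.2 ∉ S := by
      intro hs
      apply h3
      refine Finset.mem_image.2 ⟨insert x p.2, Finset.mem_filter.2 ⟨hs, Finset.mem_insert_self x _⟩, ?_⟩
      rw [Finset.erase_insert hxp2]
    have sdiff_eq : ∀ (s u : Finset α), x ∉ s → x ∉ u →
        insert x s \ insert x u = s \ u := by
      intro s u hxs hxu
      ext c
      simp only [Finset.mem_sdiff, Finset.mem_insert]
      constructor
      · rintro ⟨rfl | hcs, hc⟩
        · exact absurd (Or.inl rfl) hc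
        · exact ⟨hcs, fun h => hc (Or.inr h)⟩
      · rintro ⟨hcs, hcu⟩
        refine ⟨Or.inr hcs, ?_⟩
        rintro (rfl | h)
        · exact hxs hcs
        · exact hcu h
    refine Finset.mem_filter.2 ⟨mem_cutP.2 ⟨?_, ⟨?_, hins2S⟩, ?_, ?_⟩,
      Finset.mem_insert_self x _, Finset.mem_insert_self x _⟩
    · dsimp only; rw [hA1]; exact hAS
    · exact Finset.mem_powersetCard.2 ⟨hins2W, hins2card⟩
    · dsimp only; rw [sdiff_eq _ _ hxp1 hxp2]; exact h4
    · dsimp only; rw [sdiff_eq _ _ hxp2 hxp1]; exact h5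
  · intro p hp q hq h
    rw [Finset.mem_coe, mem_cutP] at hp hq
    have hp1 : x ∉ p.1 := by
      obtain ⟨h1, _, _⟩ := hp
      simp only [Finset.mem_image, Finset.mem_filter] at h1
      obtain ⟨A, _, hAe⟩ := h1
      rw [← hAe]
      exact fun h => (Finset.mem_erase.1 h).1 rfl
    have hq1 : x ∉ q.1 := by
      obtain ⟨h1, _, _⟩ := hq
      simp only [Finset.mem_image, Finset.mem_filter] at h1
      obtain ⟨A, _, hAe⟩ := h1
      rw [← hAe]
      exact fun h => (Finset.mem_erase.1 h).1 rfl
    have hp2 : x ∉ p.2 := by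
      obtain ⟨_, ⟨h2, _⟩, _⟩ := hp
      exact fun h => (Finset.mem_erase.1 ((Finset.mem_powersetCard.1 h2).1 h)).1 rfl
    have hq2 : x ∉ q.2 := by
      obtain ⟨_, ⟨h2, _⟩, _⟩ := hq
      exact fun h => (Finset.mem_erase.1 ((Finset.mem_powersetCard.1 h2).1 h)).1 rfl
    have h' := Prod.ext_iff.1 h
    simp only at h'
    have e1 : p.1 = q.1 := by
      rw [← Finset.erase_insert hp1, ← Finset.erase_insert hq1, h'.1]
    have e2 : p.2 = q.2 := by
      rw [← Finset.erase_insert hp2, ← Finset.erase_insert hq2, h'.2]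
    exact Prod.ext e1 e2

lemma insert_left_inj {E : Finset α} {y y' : α} (hy : y ∉ E) (h : insert y E = insert y' E) :
    y = y' := by
  have : y ∈ insert y' E := h ▸ Finset.mem_insert_self y E
  rcases Finset.mem_insert.1 this with rfl | hc
  · rfl
  · exact absurd hc hy

lemma insert_erase_inj {B : Finset α} {x a a' : α} (hx : x ∉ B) (ha : a ∈ B)
    (h : insert x (B.erase a) = insert x (B.erase a')) : a = a' := by
  have hxa : x ∉ B.erase a := fun h => hx (Finset.mem_of_mem_erase h)
  have hxa' : x ∉ B.erase a' := fun h => hx (Finset.mem_of_mem_erase h)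
  have e1 : B.erase a = B.erase a' := by
    rw [← Finset.erase_insert hxa, ← Finset.erase_insert hxa', h]
  by_contra hne
  have : a ∈ B.erase a' := Finset.mem_erase.2 ⟨hne, ha⟩
  rw [← e1] at this
  exact (Finset.mem_erase.1 this).1 rfl

lemma filter2_le {β : Type*} [DecidableEq β] (E : Finset β) (P Q : β → Prop)
    [DecidablePred P] [DecidablePred Q] (h : ∀ p ∈ E, P p → Q p → False) :
    (E.filter P).card + (E.filter Q).card ≤ E.card := by
  rw [← Finset.card_union_of_disjoint]
  · exact Finset.card_le_card (Finset.union_subset (Finset.filter_subset _ _)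
      (Finset.filter_subset _ _))
  · rw [Finset.disjoint_left]
    intro p hp hq
    exact h p (Finset.filter_subset _ _ hp) (Finset.mem_filter.1 hp).2 (Finset.mem_filter.1 hq).2

lemma case_A {W : Finset α} {x : α} {k : ℕ} {S : Finset (Finset α)}
    (hxW : x ∈ W) (hS : S ⊆ W.powersetCard k) (hk1 : 1 ≤ k) (hkw : k < W.card)
    (hx : ∀ A ∈ S, x ∉ A) (hSne : S.Nonempty) (hSc : (W.powersetCard k \ S).Nonempty)
    (hIH : ((W.erase x).powersetCard k \ S).Nonempty →
      k * ((W.erase x).card - k) ≤ (cutP (W.erase x) k S).card) :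
    k * (W.card - k) ≤ (cutP W k S).card := by
  classical
  by_cases hfull : ((W.erase x).powersetCard k \ S).Nonempty
  · have h0 : k * (W.card - 1 - k) ≤
        ((cutP W k S).filter fun p => x ∉ p.1 ∧ x ∉ p.2).card := by
      have he : S.filter (fun A => x ∉ A) = S := Finset.filter_true_of_mem hx
      have := hIH hfull
      rw [Finset.card_erase_of_mem hxW] at this
      calc k * (W.card - 1 - k) ≤ (cutP (W.erase x) k S).card := this
        _ = _ := by rw [← he, cutP_erase_eq, he]
    have h1 : S.card * k ≤ ((cutP W k S).filter fun p => x ∈ p.2).card := up_cross hS hx hxW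
    have h2 : k ≤ S.card * k := Nat.le_mul_of_pos_left k (Finset.card_pos.2 hSne)
    have h3 := filter2_le (cutP W k S) (fun p => x ∉ p.1 ∧ x ∉ p.2) (fun p => x ∈ p.2)
      (fun p _ hP hQ => hP.2 hQ)
    have harith : k * (W.card - k) = k * (W.card - 1 - k) + k := by
      have : W.card - k = (W.card - 1 - k) + 1 := by omega
      rw [this, Nat.mul_add, Nat.mul_one]
    omega
  · rw [Finset.not_nonempty_iff_eq_empty, Finset.sdiff_eq_empty_iff_subset] at hfull
    obtain ⟨B₁, hB₁⟩ := hSc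
    rw [Finset.mem_sdiff] at hB₁
    obtain ⟨hB₁W, hB₁card⟩ := Finset.mem_powersetCard.1 hB₁.1
    have hxB₁ : x ∈ B₁ := by
      by_contra hxB
      exact hB₁.2 (hfull (Finset.mem_powersetCard.2
        ⟨Finset.subset_erase.2 ⟨hB₁W, hxB⟩, hB₁card⟩))
    have hScard : W.card - k ≤ S.card := by
      have := Finset.card_le_card_of_injOn (fun y => insert y (B₁.erase x))
        (s := W \ B₁) (t := S) ?_ ?_
      · rwa [Finset.card_sdiff_of_subset hB₁W, hB₁card] at this
      · intro y hy
        rw [Finset.mem_coe, Finset.mem_sdiff] at hy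
        have hyx : y ≠ x := fun h => hy.2 (h ▸ hxB₁)
        have hyE : y ∉ B₁.erase x := fun h => hy.2 (Finset.mem_of_mem_erase h)
        apply hfull
        refine Finset.mem_powersetCard.2 ⟨?_, ?_⟩
        · intro c hc
          rcases Finset.mem_insert.1 hc with rfl | hc
          · exact Finset.mem_erase.2 ⟨hyx, hy.1⟩
          · exact Finset.erase_subset_erase x hB₁W hc
        · rw [Finset.card_insert_of_notMem hyE, Finset.card_erase_of_mem hxB₁, hB₁card]
          omega
      · intro y hy y' hy' h
        have hyE : y ∉ B₁.erase x := fun h =>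
          (Finset.mem_sdiff.1 hy).2 (Finset.mem_of_mem_erase h)
        exact insert_left_inj hyE h
    calc k * (W.card - k) = (W.card - k) * k := Nat.mul_comm _ _
      _ ≤ S.card * k := Nat.mul_le_mul_right k hScard
      _ ≤ ((cutP W k S).filter fun p => x ∈ p.2).card := up_cross hS hx hxW
      _ ≤ (cutP W k S).card := Finset.card_le_card (Finset.filter_subset _ _)

lemma case_B {W : Finset α} {x : α} {k : ℕ} {S : Finset (Finset α)}
    (hxW : x ∈ W) (hS : S ⊆ W.powersetCard k) (hk1 : 1 ≤ k) (hkw : k < W.card)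
    (hx : ∀ A ∈ S, x ∈ A) (hSne : S.Nonempty) (hSc : (W.powersetCard k \ S).Nonempty)
    (hIH : ((W.erase x).powersetCard (k - 1) \
        ((S.filter fun A => x ∈ A).image fun A => A.erase x)).Nonempty →
      (k - 1) * ((W.erase x).card - (k - 1)) ≤
        (cutP (W.erase x) (k - 1) ((S.filter fun A => x ∈ A).image fun A => A.erase x)).card) :
    k * (W.card - k) ≤ (cutP W k S).card := by
  classical
  set S₁ : Finset (Finset α) := (S.filter fun A => x ∈ A).image fun A => A.erase x with hS₁
  have hallmem : ∀ C ∈ W.powersetCard k, x ∈ C → C.erase x ∈ S₁ → C ∈ S := by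
    intro C _ hxC hCS
    rw [hS₁, Finset.mem_image] at hCS
    obtain ⟨A, hA, hAe⟩ := hCS
    rw [Finset.mem_filter] at hA
    have : A = C := by
      rw [← Finset.insert_erase hA.2, hAe, Finset.insert_erase hxC]
    exact this ▸ hA.1
  by_cases hfull : ((W.erase x).powersetCard (k - 1) \ S₁).Nonempty
  · have h1 : (k - 1) * (W.card - k) ≤
        ((cutP W k S).filter fun p => x ∈ p.1 ∧ x ∈ p.2).card := by
      have := hIH hfull
      rw [Finset.card_erase_of_mem hxW] at this
      have he : W.card - 1 - (k - 1) = W.card - k := by omega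
      rw [he] at this
      exact this.trans (cutP_insert_le hxW hk1)
    have h2 : S.card * (W.card - k) ≤ ((cutP W k S).filter fun p => x ∉ p.2).card :=
      down_cross hS hx
    have h2' : W.card - k ≤ S.card * (W.card - k) :=
      Nat.le_mul_of_pos_left _ (Finset.card_pos.2 hSne)
    have h3 := filter2_le (cutP W k S) (fun p => x ∈ p.1 ∧ x ∈ p.2) (fun p => x ∉ p.2)
      (fun p _ hP hQ => hQ hP.2)
    have harith : k * (W.card - k) = (k - 1) * (W.card - k) + (W.card - k) := by
      have : k = (k - 1) + 1 := by omega
      nth_rewrite 1 [this]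
      rw [Nat.add_mul, Nat.one_mul]
    omega
  · rw [Finset.not_nonempty_iff_eq_empty, Finset.sdiff_eq_empty_iff_subset] at hfull
    have hall : ∀ C ∈ W.powersetCard k, x ∈ C → C ∈ S := by
      intro C hC hxC
      obtain ⟨hCW, hCcard⟩ := Finset.mem_powersetCard.1 hC
      refine hallmem C hC hxC (hfull ?_)
      refine Finset.mem_powersetCard.2 ⟨Finset.erase_subset_erase x hCW, ?_⟩
      rw [Finset.card_erase_of_mem hxC, hCcard]
    obtain ⟨B₁, hB₁⟩ := hSc
    rw [Finset.mem_sdiff] at hB₁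
    obtain ⟨hB₁W, hB₁card⟩ := Finset.mem_powersetCard.1 hB₁.1
    have hxB₁ : x ∉ B₁ := fun h => hB₁.2 (hall B₁ hB₁.1 h)
    have hScard : k ≤ S.card := by
      have := Finset.card_le_card_of_injOn (fun b => insert x (B₁.erase b))
        (s := B₁) (t := S) ?_ ?_
      · rwa [hB₁card] at this
      · intro b hb
        have hxE : x ∉ B₁.erase b := fun h => hxB₁ (Finset.mem_of_mem_erase h)
        have hmem : insert x (B₁.erase b) ∈ W.powersetCard k := by
          refine Finset.mem_powersetCard.2 ⟨?_, ?_⟩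
          · intro c hc
            rcases Finset.mem_insert.1 hc with rfl | hc
            · exact hxW
            · exact hB₁W (Finset.mem_of_mem_erase hc)
          · rw [Finset.card_insert_of_notMem hxE, Finset.card_erase_of_mem hb, hB₁card]
            omega
        exact hall _ hmem (Finset.mem_insert_self x _)
      · intro b hb b' hb' h
        exact insert_erase_inj hxB₁ hb h
    calc k * (W.card - k) ≤ S.card * (W.card - k) := Nat.mul_le_mul_right _ hScard
      _ ≤ ((cutP W k S).filter fun p => x ∉ p.2).card := down_cross hS hx
      _ ≤ (cutP W k S).card := Finset.card_le_card (Finset.filter_subset _ _)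

lemma two_mem_pcard {W : Finset α} {k : ℕ} {A B : Finset α} (hA : A ∈ W.powersetCard k)
    (hB : B ∈ W.powersetCard k) (hne : A ≠ B) : 1 ≤ k ∧ k < W.card := by
  obtain ⟨hA1, hA2⟩ := Finset.mem_powersetCard.1 hA
  obtain ⟨hB1, hB2⟩ := Finset.mem_powersetCard.1 hB
  constructor
  · by_contra h
    push_neg at h
    interval_cases k
    · exact hne ((Finset.card_eq_zero.1 hA2).trans (Finset.card_eq_zero.1 hB2).symm)
  · have hle : k ≤ W.card := hA2 ▸ Finset.card_le_card hA1
    rcases lt_or_eq_of_le hle with h | h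
    · exact h
    · exfalso
      have eA : A = W := Finset.eq_of_subset_of_card_le hA1 (by omega)
      have eB : B = W := Finset.eq_of_subset_of_card_le hB1 (by omega)
      exact hne (eA.trans eB.symm)

lemma arith1 {k w : ℕ} (hk : 2 ≤ k) (hw : k + 2 ≤ w) :
    k * (w - k) ≤ k * (w - 1 - k) + (k - 1) * (w - 1 - (k - 1)) := by
  obtain ⟨a, rfl⟩ : ∃ a, k = a + 2 := ⟨k - 2, by omega⟩
  obtain ⟨b, rfl⟩ : ∃ b, w = (a + 2) + (b + 2) := ⟨w - (a + 2) - 2, by omega⟩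
  have e1 : (a + 2) + (b + 2) - (a + 2) = b + 2 := by omega
  have e2 : (a + 2) + (b + 2) - 1 - (a + 2) = b + 1 := by omega
  have e4 : (a + 2) - 1 = a + 1 := by omega
  have e3 : (a + 2) + (b + 2) - 1 - (a + 1) = b + 2 := by omega
  rw [e1, e2, e4, e3]
  nlinarith [Nat.zero_le (a * b)]

lemma compl_filter_not {W : Finset α} {x : α} {k : ℕ} {S : Finset (Finset α)} :
    (W.powersetCard k \ S).filter (fun A => x ∉ A) =
      (W.erase x).powersetCard k \ (S.filter fun A => x ∉ A) := by
  ext A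
  simp only [Finset.mem_filter, Finset.mem_sdiff, Finset.mem_powersetCard, Finset.subset_erase]
  constructor
  · rintro ⟨⟨⟨h1, h2⟩, h3⟩, h4⟩
    exact ⟨⟨⟨h1, h4⟩, h2⟩, fun hs => h3 hs.1⟩
  · rintro ⟨⟨⟨h1, h4⟩, h2⟩, h3⟩
    exact ⟨⟨⟨h1, h2⟩, fun hs => h3 ⟨hs, h4⟩⟩, h4⟩

lemma compl_image_erase {W : Finset α} {x : α} {k : ℕ} {S : Finset (Finset α)}
    (hS : S ⊆ W.powersetCard k) (hxW : x ∈ W) (hk : 1 ≤ k) :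
    (((W.powersetCard k \ S).filter fun A => x ∈ A).image fun A => A.erase x) =
      (W.erase x).powersetCard (k - 1) \
        ((S.filter fun A => x ∈ A).image fun A => A.erase x) := by
  ext B
  simp only [Finset.mem_image, Finset.mem_filter, Finset.mem_sdiff, Finset.mem_powersetCard,
    Finset.subset_erase]
  constructor
  · rintro ⟨C, ⟨⟨⟨hCW, hCcard⟩, hCS⟩, hxC⟩, rfl⟩
    refine ⟨⟨⟨fun c hc => hCW (Finset.mem_of_mem_erase hc),
        fun h => (Finset.mem_erase.1 h).1 rfl⟩, by rw [Finset.card_erase_of_mem hxC, hCcard]⟩, ?_⟩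
    rintro ⟨A, ⟨hAS, hxA⟩, hAe⟩
    have : A = C := by rw [← Finset.insert_erase hxA, hAe, Finset.insert_erase hxC]
    exact hCS (this ▸ hAS)
  · rintro ⟨⟨⟨hBW, hxB⟩, hBcard⟩, hB⟩
    refine ⟨insert x B, ⟨⟨⟨?_, ?_⟩, ?_⟩, Finset.mem_insert_self x B⟩, Finset.erase_insert hxB⟩
    · intro c hc
      rcases Finset.mem_insert.1 hc with rfl | hc
      · exact hxW
      · exact hBW hc
    · rw [Finset.card_insert_of_notMem hxB, hBcard]; omega
    · intro hs
      exact hB ⟨insert x B, ⟨hs, Finset.mem_insert_self x B⟩, Finset.erase_insert hxB⟩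

lemma key (W : Finset α) : ∀ (k : ℕ) (S : Finset (Finset α)), S ⊆ W.powersetCard k →
    S.Nonempty → (W.powersetCard k \ S).Nonempty →
    k * (W.card - k) ≤ (cutP W k S).card := by
  induction W using Finset.strongInduction with
  | _ W IH =>
    intro k S hS hne hcne
    obtain ⟨A₀, hA₀⟩ := hne
    obtain ⟨B₀, hB₀⟩ := hcne
    rw [Finset.mem_sdiff] at hB₀
    have hAB : A₀ ≠ B₀ := fun h => hB₀.2 (h ▸ hA₀)
    obtain ⟨hk1, hkw⟩ := two_mem_pcard (hS hA₀) hB₀.1 hAB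
    have hWne : W.Nonempty := Finset.card_pos.1 (by omega)
    obtain ⟨x, hxW⟩ := hWne
    have hWsub : W.erase x ⊂ W := Finset.erase_ssubset hxW
    have hcompl : W.powersetCard k \ (W.powersetCard k \ S) = S := by
      rw [Finset.sdiff_sdiff_self_left, Finset.inter_eq_right.2 hS]
    have hScsub : W.powersetCard k \ S ⊆ W.powersetCard k := Finset.sdiff_subset
    by_cases hA : ∀ A ∈ S, x ∉ A
    · refine case_A hxW hS hk1 hkw hA ⟨A₀, hA₀⟩ ⟨B₀, Finset.mem_sdiff.2 hB₀⟩ ?_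
      intro hfe
      have hS' : S ⊆ (W.erase x).powersetCard k := by
        intro A hA'
        obtain ⟨h1, h2⟩ := Finset.mem_powersetCard.1 (hS hA')
        exact Finset.mem_powersetCard.2 ⟨Finset.subset_erase.2 ⟨h1, hA A hA'⟩, h2⟩
      exact IH _ hWsub k S hS' ⟨A₀, hA₀⟩ hfe
    · by_cases hB : ∀ A ∈ S, x ∈ A
      · refine case_B hxW hS hk1 hkw hB ⟨A₀, hA₀⟩ ⟨B₀, Finset.mem_sdiff.2 hB₀⟩ ?_
        intro hfe
        refine IH _ hWsub (k - 1) _ ?_ ?_ hfe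
        · intro B hB'
          simp only [Finset.mem_image, Finset.mem_filter] at hB'
          obtain ⟨A, ⟨hAS, hxA⟩, rfl⟩ := hB'
          obtain ⟨h1, h2⟩ := Finset.mem_powersetCard.1 (hS hAS)
          exact Finset.mem_powersetCard.2 ⟨Finset.erase_subset_erase x h1,
            by rw [Finset.card_erase_of_mem hxA, h2]⟩
        · exact ⟨A₀.erase x, Finset.mem_image.2 ⟨A₀,
            Finset.mem_filter.2 ⟨hA₀, hB A₀ hA₀⟩, rfl⟩⟩
      · push_neg at hA hB
        by_cases hcA : ∀ A ∈ W.powersetCard k \ S, x ∉ A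
        · -- complement avoids x: use case_A on the complement
          rw [← cutP_compl_card hS]
          refine case_A hxW hScsub hk1 hkw hcA ⟨B₀, Finset.mem_sdiff.2 hB₀⟩
            (by rw [hcompl]; exact ⟨A₀, hA₀⟩) ?_
          intro hfe
          have hS' : W.powersetCard k \ S ⊆ (W.erase x).powersetCard k := by
            intro A hA'
            obtain ⟨h1, h2⟩ := Finset.mem_powersetCard.1 (hScsub hA')
            exact Finset.mem_powersetCard.2 ⟨Finset.subset_erase.2 ⟨h1, hcA A hA'⟩, h2⟩
          exact IH _ hWsub k _ hS' ⟨B₀, Finset.mem_sdiff.2 hB₀⟩ hfe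
        · by_cases hcB : ∀ A ∈ W.powersetCard k \ S, x ∈ A
          · rw [← cutP_compl_card hS]
            refine case_B hxW hScsub hk1 hkw hcB ⟨B₀, Finset.mem_sdiff.2 hB₀⟩
              (by rw [hcompl]; exact ⟨A₀, hA₀⟩) ?_
            intro hfe
            refine IH _ hWsub (k - 1) _ ?_ ?_ hfe
            · intro B hB'
              simp only [Finset.mem_image, Finset.mem_filter] at hB'
              obtain ⟨A, ⟨hAS, hxA⟩, rfl⟩ := hB'
              obtain ⟨h1, h2⟩ := Finset.mem_powersetCard.1 (hScsub hAS)
              exact Finset.mem_powersetCard.2 ⟨Finset.erase_subset_erase x h1,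
                by rw [Finset.card_erase_of_mem hxA, h2]⟩
            · exact ⟨B₀.erase x, Finset.mem_image.2 ⟨B₀,
                Finset.mem_filter.2 ⟨Finset.mem_sdiff.2 hB₀, hcB B₀ (Finset.mem_sdiff.2 hB₀)⟩,
                rfl⟩⟩
          · -- all four parts nonempty : the "proper/proper" case
            push_neg at hcA hcB
            obtain ⟨A1, hA1S, hxA1⟩ := hB      -- A1 ∈ S, x ∉ A1
            obtain ⟨A2, hA2S, hxA2⟩ := hA      -- A2 ∈ S, x ∈ A2
            obtain ⟨B1, hB1c, hxB1⟩ := hcB     -- B1 ∈ Sᶜ, x ∉ B1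
            obtain ⟨B2, hB2c, hxB2⟩ := hcA     -- B2 ∈ Sᶜ, x ∈ B2
            -- S₀ := S.filter (x ∉ ·), proper nonempty in (W.erase x).powersetCard k
            have hS₀sub : S.filter (fun A => x ∉ A) ⊆ (W.erase x).powersetCard k := by
              intro A hA'
              rw [Finset.mem_filter] at hA'
              obtain ⟨h1, h2⟩ := Finset.mem_powersetCard.1 (hS hA'.1)
              exact Finset.mem_powersetCard.2 ⟨Finset.subset_erase.2 ⟨h1, hA'.2⟩, h2⟩
            have hS₀ne : (S.filter fun A => x ∉ A).Nonempty :=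
              ⟨A1, Finset.mem_filter.2 ⟨hA1S, hxA1⟩⟩
            have hS₀pr : ((W.erase x).powersetCard k \ S.filter (fun A => x ∉ A)).Nonempty := by
              refine ⟨B1, ?_⟩
              rw [← compl_filter_not]
              exact Finset.mem_filter.2 ⟨hB1c, hxB1⟩
            have hS₁sub : ((S.filter fun A => x ∈ A).image fun A => A.erase x) ⊆
                (W.erase x).powersetCard (k - 1) := by
              intro B hB'
              simp only [Finset.mem_image, Finset.mem_filter] at hB'
              obtain ⟨A, ⟨hAS, hxA⟩, rfl⟩ := hB'
              obtain ⟨h1, h2⟩ := Finset.mem_powersetCard.1 (hS hAS)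
              exact Finset.mem_powersetCard.2 ⟨Finset.erase_subset_erase x h1,
                by rw [Finset.card_erase_of_mem hxA, h2]⟩
            have hS₁ne : ((S.filter fun A => x ∈ A).image fun A => A.erase x).Nonempty :=
              ⟨A2.erase x, Finset.mem_image.2 ⟨A2, Finset.mem_filter.2 ⟨hA2S, hxA2⟩, rfl⟩⟩
            have hS₁pr : ((W.erase x).powersetCard (k - 1) \
                ((S.filter fun A => x ∈ A).image fun A => A.erase x)).Nonempty := by
              refine ⟨B2.erase x, ?_⟩
              rw [← compl_image_erase hS hxW hk1]
              exact Finset.mem_image.2 ⟨B2,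
                Finset.mem_filter.2 ⟨hB2c, hxB2⟩, rfl⟩
            -- bounds via IH
            have hwe : (W.erase x).card = W.card - 1 := Finset.card_erase_of_mem hxW
            have h0 : k * (W.card - 1 - k) ≤
                ((cutP W k S).filter fun p => x ∉ p.1 ∧ x ∉ p.2).card := by
              rw [← cutP_erase_eq]
              have := IH _ hWsub k _ hS₀sub hS₀ne hS₀pr
              rwa [hwe] at this
            have h1 : (k - 1) * (W.card - 1 - (k - 1)) ≤
                ((cutP W k S).filter fun p => x ∈ p.1 ∧ x ∈ p.2).card := by
              have := IH _ hWsub (k - 1) _ hS₁sub hS₁ne hS₁pr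
              rw [hwe] at this
              exact this.trans (cutP_insert_le hxW hk1)
            have h3 := filter2_le (cutP W k S) (fun p => x ∉ p.1 ∧ x ∉ p.2)
              (fun p => x ∈ p.1 ∧ x ∈ p.2) (fun p _ hP hQ => hP.1 hQ.1)
            -- k ≥ 2 and k + 2 ≤ W.card
            have hk2 : 2 ≤ k := by
              obtain ⟨C1, hC1⟩ := hS₁ne
              obtain ⟨C2, hC2⟩ := hS₁pr
              rw [Finset.mem_sdiff] at hC2
              have hne12 : C1 ≠ C2 := fun h => hC2.2 (h ▸ hC1)
              have := (two_mem_pcard (hS₁sub hC1) hC2.1 hne12).1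
              omega
            have hkw2 : k + 2 ≤ W.card := by
              obtain ⟨C1, hC1⟩ := hS₀ne
              obtain ⟨C2, hC2⟩ := hS₀pr
              rw [Finset.mem_sdiff] at hC2
              have hne12 : C1 ≠ C2 := fun h => hC2.2 (h ▸ hC1)
              have h' := (two_mem_pcard (hS₀sub hC1) hC2.1 hne12).2
              rw [hwe] at h'
              omega
            have := arith1 hk2 hkw2
            omega

lemma sdcard {s u : Finset α} (hc : s.card = u.card) {x y : α} (hxy : x ≠ y)
    (h : symmDiff s u = {x, y}) : (s \ u).card = 1 ∧ (u \ s).card = 1 := by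
  have hu : s \ u ∪ u \ s = {x, y} := by
    rw [← Finset.sup_eq_union, ← symmDiff_def]; exact h
  have h2 : (s \ u).card + (u \ s).card = 2 := by
    rw [← Finset.card_union_of_disjoint disjoint_sdiff_sdiff, hu, Finset.card_pair hxy]
  have h3 : (s \ u).card = (u \ s).card := Finset.card_sdiff_comm hc
  omega

end TokenAux

section Top
variable {n k : ℕ}

lemma tokenAdj_iff {a b : {s : Finset (Fin n) // s.card = k}} :
    (tokenGraph (⊤ : SimpleGraph (Fin n)) k).Adj a b ↔
      (a.1 \ b.1).card = 1 ∧ (b.1 \ a.1).card = 1 := by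
  rw [tokenGraph, SimpleGraph.fromRel_adj]
  constructor
  · rintro ⟨hne, h | h⟩
    · obtain ⟨x, y, hxy, hsd⟩ := h
      exact sdcard (a.2.trans b.2.symm) ((top_adj x y).1 hxy) hsd
    · obtain ⟨x, y, hxy, hsd⟩ := h
      rw [symmDiff_comm] at hsd
      exact sdcard (a.2.trans b.2.symm) ((top_adj x y).1 hxy) hsd
  · rintro ⟨h1, h2⟩
    obtain ⟨x, hx⟩ := Finset.card_eq_one.1 h1
    obtain ⟨y, hy⟩ := Finset.card_eq_one.1 h2
    have hxm : x ∈ a.1 \ b.1 := hx ▸ Finset.mem_singleton_self x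
    have hym : y ∈ b.1 \ a.1 := hy ▸ Finset.mem_singleton_self y
    rw [Finset.mem_sdiff] at hxm hym
    have hxy : x ≠ y := fun h => hym.2 (h ▸ hxm.1)
    refine ⟨?_, Or.inl ⟨x, y, (top_adj x y).2 hxy, ?_⟩⟩
    · intro h
      rw [h] at hxm
      exact hxm.2 hxm.1
    · rw [symmDiff_def, Finset.sup_eq_union, hx, hy]
      rfl

lemma neighbor_card (hk : 1 ≤ k) (a : {s : Finset (Fin n) // s.card = k}) :
    ((univ : Finset {s : Finset (Fin n) // s.card = k}).filter
      fun b => (tokenGraph (⊤ : SimpleGraph (Fin n)) k).Adj a b).card = k * (n - k) := by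
  classical
  have hsub : a.1 ⊆ univ := Finset.subset_univ _
  have hB : ∀ p : Fin n × Fin n, p.1 ∈ a.1 → p.2 ∉ a.1 →
      (insert p.2 (a.1.erase p.1)).card = k := by
    intro p hp1 hp2
    have : p.2 ∉ a.1.erase p.1 := fun h => hp2 (Finset.mem_of_mem_erase h)
    rw [Finset.card_insert_of_notMem this, Finset.card_erase_of_mem hp1, a.2]
    omega
  have := Finset.card_bij
    (i := fun (p : Fin n × Fin n) (hp : p ∈ a.1 ×ˢ (univ \ a.1)) =>
      (⟨insert p.2 (a.1.erase p.1), by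
        have hp' := Finset.mem_product.1 hp
        exact hB p hp'.1 (Finset.mem_sdiff.1 hp'.2).2⟩ :
        {s : Finset (Fin n) // s.card = k}))
    (hi := ?_) (i_inj := ?_) (i_surj := ?_)
    (s := a.1 ×ˢ (univ \ a.1))
    (t := (univ : Finset {s : Finset (Fin n) // s.card = k}).filter
      fun b => (tokenGraph (⊤ : SimpleGraph (Fin n)) k).Adj a b)
  · rw [← this, Finset.card_product, a.2, Finset.card_sdiff_of_subset hsub, Finset.card_univ,
      Fintype.card_fin, a.2]
  · -- membership
    rintro ⟨x, y⟩ hp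
    have hp' := Finset.mem_product.1 hp
    have hx : x ∈ a.1 := hp'.1
    have hy : y ∉ a.1 := (Finset.mem_sdiff.1 hp'.2).2
    have hxy : x ≠ y := fun h => hy (h ▸ hx)
    refine Finset.mem_filter.2 ⟨Finset.mem_univ _, tokenAdj_iff.2 ⟨?_, ?_⟩⟩
    · have : a.1 \ insert y (a.1.erase x) = {x} := by
        ext c
        simp only [Finset.mem_sdiff, Finset.mem_insert, Finset.mem_erase, Finset.mem_singleton]
        constructor
        · rintro ⟨hcA, hc⟩
          push_neg at hc
          by_contra hcx
          exact (hc.2 hcx) hcA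
        · rintro rfl
          refine ⟨hx, ?_⟩
          push_neg
          exact ⟨fun h => hy (h ▸ hx), fun h => absurd rfl h⟩
      rw [this, Finset.card_singleton]
    · have : insert y (a.1.erase x) \ a.1 = {y} := by
        ext c
        simp only [Finset.mem_sdiff, Finset.mem_insert, Finset.mem_erase, Finset.mem_singleton]
        constructor
        · rintro ⟨rfl | hc, hcA⟩
          · rfl
          · exact absurd hc.2 hcA
        · rintro rfl
          exact ⟨Or.inl rfl, hy⟩
      rw [this, Finset.card_singleton]
  · -- injectivity
    rintro ⟨x, y⟩ hp ⟨x', y'⟩ hp' h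
    have hp1 := Finset.mem_product.1 hp
    have hp1' := Finset.mem_product.1 hp'
    have hx : x ∈ a.1 := hp1.1
    have hy : y ∉ a.1 := (Finset.mem_sdiff.1 hp1.2).2
    have hx' : x' ∈ a.1 := hp1'.1
    have hy' : y' ∉ a.1 := (Finset.mem_sdiff.1 hp1'.2).2
    have hBeq : insert y (a.1.erase x) = insert y' (a.1.erase x') := congrArg Subtype.val h
    have hsd1 : a.1 \ insert y (a.1.erase x) = {x} := by
      ext c
      simp only [Finset.mem_sdiff, Finset.mem_insert, Finset.mem_erase, Finset.mem_singleton]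
      constructor
      · rintro ⟨hcA, hc⟩
        push_neg at hc
        by_contra hcx
        exact (hc.2 hcx) hcA
      · rintro rfl
        exact ⟨hx, by push_neg; exact ⟨fun h => hy (h ▸ hx), fun h => absurd rfl h⟩⟩
    have hsd1' : a.1 \ insert y' (a.1.erase x') = {x'} := by
      ext c
      simp only [Finset.mem_sdiff, Finset.mem_insert, Finset.mem_erase, Finset.mem_singleton]
      constructor
      · rintro ⟨hcA, hc⟩
        push_neg at hc
        by_contra hcx
        exact (hc.2 hcx) hcA
      · rintro rfl
        exact ⟨hx', by push_neg; exact ⟨fun h => hy' (h ▸ hx'), fun h => absurd rfl h⟩⟩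
    have ex : x = x' := by
      have : ({x} : Finset (Fin n)) = {x'} := by rw [← hsd1, ← hsd1', hBeq]
      exact Finset.singleton_injective this
    have ey : y = y' := by
      have h1 : y ∈ insert y' (a.1.erase x') := hBeq ▸ Finset.mem_insert_self y _
      rcases Finset.mem_insert.1 h1 with h1 | h1
      · exact h1
      · exact absurd (Finset.mem_of_mem_erase h1) hy
    simp [ex, ey]
  · -- surjectivity
    intro b hb
    have hadj := tokenAdj_iff.1 (Finset.mem_filter.1 hb).2
    obtain ⟨x, hx⟩ := Finset.card_eq_one.1 hadj.1
    obtain ⟨y, hy⟩ := Finset.card_eq_one.1 hadj.2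
    have hxm : x ∈ a.1 \ b.1 := hx ▸ Finset.mem_singleton_self x
    have hym : y ∈ b.1 \ a.1 := hy ▸ Finset.mem_singleton_self y
    rw [Finset.mem_sdiff] at hxm hym
    refine ⟨(x, y), Finset.mem_product.2 ⟨hxm.1, Finset.mem_sdiff.2 ⟨Finset.mem_univ _, hym.2⟩⟩, ?_⟩
    apply Subtype.ext
    show insert y (a.1.erase x) = b.1
    refine Eq.symm ?_
    ext c
    simp only [Finset.mem_insert, Finset.mem_erase]
    constructor
    · intro hc
      by_cases hca : c ∈ a.1
      · right
        refine ⟨fun h => hxm.2 (h ▸ hc), hca⟩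
      · left
        have : c ∈ b.1 \ a.1 := Finset.mem_sdiff.2 ⟨hc, hca⟩
        rw [hy] at this
        exact Finset.mem_singleton.1 this
    · rintro (rfl | ⟨hcx, hca⟩)
      · exact hym.1
      · by_contra hcb
        have : c ∈ a.1 \ b.1 := Finset.mem_sdiff.2 ⟨hca, hcb⟩
        rw [hx] at this
        exact hcx (Finset.mem_singleton.1 this)

end Top

section Final
variable {t k : ℕ}

lemma lower (h1 : 1 ≤ k) (hk : k ≤ t) :
    EdgeConnected (tokenGraph (⊤ : SimpleGraph (Fin (t + 1))) k) (k * (t + 1 - k)) := by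
  classical
  intro F hF
  set G := tokenGraph (⊤ : SimpleGraph (Fin (t + 1))) k with hG
  set G' := G.deleteEdges (F : Set (Sym2 _)) with hG'
  obtain ⟨A₀set, hA₀sub, hA₀card⟩ := Finset.exists_subset_card_eq
    (show k ≤ (univ : Finset (Fin (t + 1))).card by rw [Finset.card_univ, Fintype.card_fin]; omega)
  set a₀ : {s : Finset (Fin (t + 1)) // s.card = k} := ⟨A₀set, hA₀card⟩ with ha₀
  have hreach : ∀ u, G'.Reachable a₀ u := by
    by_contra hcon
    push_neg at hcon
    obtain ⟨u, hu⟩ := hcon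
    set S : Finset {s : Finset (Fin (t + 1)) // s.card = k} :=
      univ.filter (fun v => G'.Reachable a₀ v) with hSdef
    set Sh : Finset (Finset (Fin (t + 1))) := S.image (fun v => v.1) with hShdef
    have hmemSh : ∀ v : {s : Finset (Fin (t + 1)) // s.card = k}, v.1 ∈ Sh ↔ v ∈ S := by
      intro v
      constructor
      · intro h
        obtain ⟨w, hw, hwv⟩ := Finset.mem_image.1 h
        exact (Subtype.ext hwv : w = v) ▸ hw
      · intro h
        exact Finset.mem_image.2 ⟨v, h, rfl⟩
    have ha₀S : a₀ ∈ S := Finset.mem_filter.2 ⟨Finset.mem_univ _, Reachable.refl _⟩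
    have huS : u ∉ S := fun h => hu (Finset.mem_filter.1 h).2
    have hsub : Sh ⊆ (univ : Finset (Fin (t + 1))).powersetCard k := by
      intro A hA
      obtain ⟨v, _, rfl⟩ := Finset.mem_image.1 hA
      exact Finset.mem_powersetCard_univ.2 v.2
    have hne : Sh.Nonempty := ⟨a₀.1, (hmemSh a₀).2 ha₀S⟩
    have hcne : ((univ : Finset (Fin (t + 1))).powersetCard k \ Sh).Nonempty := by
      refine ⟨u.1, Finset.mem_sdiff.2 ⟨Finset.mem_powersetCard_univ.2 u.2, ?_⟩⟩
      intro h
      exact huS ((hmemSh u).1 h)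
    have hkey : k * (t + 1 - k) ≤ (cutP univ k Sh).card := by
      have := key (univ : Finset (Fin (t + 1))) k Sh hsub hne hcne
      rwa [Finset.card_univ, Fintype.card_fin] at this
    have hcut_le : (cutP univ k Sh).card ≤ F.card := by
      have step1 : (cutP univ k Sh).card ≤
          (F.image (Sym2.map (Subtype.val :
            {s : Finset (Fin (t + 1)) // s.card = k} → Finset (Fin (t + 1))))).card := by
        apply Finset.card_le_card_of_injOn (fun p => s(p.1, p.2))
        · intro p hp
          obtain ⟨h1, ⟨h2, h3⟩, h4, h5⟩ := mem_cutP.1 hp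
          obtain ⟨v, hvS, hv1⟩ := Finset.mem_image.1 h1
          have hucard : p.2.card = k := Finset.mem_powersetCard_univ.1 h2
          set w : {s : Finset (Fin (t + 1)) // s.card = k} := ⟨p.2, hucard⟩ with hw0
          have hwS : w ∉ S := fun h => h3 ((hmemSh w).2 h)
          have hadj : G.Adj v w := by
            rw [hG]
            exact tokenAdj_iff.2 ⟨by rw [hv1]; exact h4, by rw [hv1]; exact h5⟩
          have hFmem : s(v, w) ∈ F := by
            by_contra hFn
            have hadj' : G'.Adj v w := by
              rw [hG', SimpleGraph.deleteEdges_adj]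
              exact ⟨hadj, by simpa using hFn⟩
            have : G'.Reachable a₀ w := ((Finset.mem_filter.1 hvS).2).trans hadj'.reachable
            exact hwS (Finset.mem_filter.2 ⟨Finset.mem_univ _, this⟩)
          refine Finset.mem_image.2 ⟨s(v, w), hFmem, ?_⟩
          rw [Sym2.map_pair_eq, hv1]
        · intro p hp q hq h
          simp only [Sym2.eq_iff] at h
          obtain ⟨hp1, _, _, _⟩ := mem_cutP.1 hp
          obtain ⟨_, ⟨_, hq3⟩, _, _⟩ := mem_cutP.1 hq
          rcases h with ⟨h1, h2⟩ | ⟨h1, h2⟩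
          · exact Prod.ext h1 h2
          · exact absurd (h1 ▸ hp1) hq3
      exact step1.trans Finset.card_image_le
    omega
  rw [SimpleGraph.connected_iff]
  exact ⟨fun u v => (hreach u).symm.trans (hreach v), ⟨a₀⟩⟩

lemma upper (h1 : 1 ≤ k) (hk : k ≤ t) (m : ℕ)
    (hm : EdgeConnected (tokenGraph (⊤ : SimpleGraph (Fin (t + 1))) k) m) :
    m ≤ k * (t + 1 - k) := by
  classical
  by_contra hc
  push_neg at hc
  set G := tokenGraph (⊤ : SimpleGraph (Fin (t + 1))) k with hG
  obtain ⟨A₀set, hA₀sub, hA₀card⟩ := Finset.exists_subset_card_eq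
    (show k ≤ (univ : Finset (Fin (t + 1))).card by rw [Finset.card_univ, Fintype.card_fin]; omega)
  set a₀ : {s : Finset (Fin (t + 1)) // s.card = k} := ⟨A₀set, hA₀card⟩ with ha₀
  set N := (univ : Finset {s : Finset (Fin (t + 1)) // s.card = k}).filter
    (fun b => G.Adj a₀ b) with hN
  set F := N.image (fun b => s(a₀, b)) with hFdef
  have hFcard : F.card ≤ k * (t + 1 - k) := by
    calc F.card ≤ N.card := Finset.card_image_le
      _ = k * (t + 1 - k) := neighbor_card h1 a₀
  have hconn := hm F (by omega)
  -- construct a second vertex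
  obtain ⟨x, hx⟩ : a₀.1.Nonempty := Finset.card_pos.1 (by rw [a₀.2]; omega)
  have hcompl : (a₀.1ᶜ).Nonempty := by
    rw [← Finset.card_pos, Finset.card_compl, a₀.2, Fintype.card_fin]
    omega
  obtain ⟨y, hy'⟩ := hcompl
  have hy : y ∉ a₀.1 := Finset.mem_compl.1 hy'
  have hbcard : (insert y (a₀.1.erase x)).card = k := by
    have : y ∉ a₀.1.erase x := fun h => hy (Finset.mem_of_mem_erase h)
    rw [Finset.card_insert_of_notMem this, Finset.card_erase_of_mem hx, a₀.2]
    omega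
  set b₀ : {s : Finset (Fin (t + 1)) // s.card = k} := ⟨insert y (a₀.1.erase x), hbcard⟩
  have hab : a₀ ≠ b₀ := by
    intro h
    have : y ∈ a₀.1 := by rw [h]; exact Finset.mem_insert_self y _
    exact hy this
  obtain ⟨p⟩ := hconn.preconnected a₀ b₀
  have hpnil : ¬ p.Nil := SimpleGraph.Walk.not_nil_of_ne hab
  have h := SimpleGraph.Walk.adj_snd hpnil (p := p)
  rw [SimpleGraph.deleteEdges_adj] at h
  apply h.2
  refine Finset.mem_coe.2 (Finset.mem_image.2 ⟨_, ?_, rfl⟩)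
  exact Finset.mem_filter.2 ⟨Finset.mem_univ _, h.1⟩

theorem stmt13 (t k : ℕ) (h2 : 2 ≤ k) (hk : k ≤ t) :
    edgeConn (tokenGraph (⊤ : SimpleGraph (Fin (t + 1))) k) = k * (t - k + 1) := by
  have h1 : 1 ≤ k := by omega
  have hd : t - k + 1 = t + 1 - k := by omega
  have hlow := lower h1 hk
  have hup := upper h1 hk
  rw [edgeConn]
  apply le_antisymm
  · apply csSup_le
    · exact ⟨0, fun F hF => absurd hF (Nat.not_lt_zero _)⟩
    · intro m hm
      rw [hd]
      exact hup m hm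
  · apply le_csSup
    · exact ⟨k * (t + 1 - k), fun m hm => hup m hm⟩
    · show EdgeConnected _ _
      rw [hd]
      exact hlow

end Final
end
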